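/- Let G be a loopless multigraph on n vertices with ordered degree sequence d_1 ≥ d_2 ≥ … ≥ d_n, maximum multiplicity μ(G) and minimum multiplicity μ_min(G). Assume d_1 − d_2 ≥ μ(G) − μ_min(G) ≥ 2. Then χ'(G) = Δ(G) if n is even, and χ'(G) ≤ Δ(G) + μ_min(G) if n is odd. -/

import Mathlib

open Finset Filter Asymptotics

namespace GS

variable {V : Type*}

/-- A loopless multigraph on `V`, given by a symmetric multiplicity function
with zero diagonal. -/
def IsMultigraph (G : V → V → ℕ) : Prop :=
  (∀ u v, G u v = G v u) ∧ ∀ v, G v v = 0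

/-- The degree of a vertex (edges counted with multiplicity). -/
def mdeg [Fintype V] (G : V → V → ℕ) (v : V) : ℕ := ∑ u, G v u

/-- The maximum degree `Δ(G)`. -/
def maxDeg [Fintype V] (G : V → V → ℕ) : ℕ := Finset.univ.sup (mdeg G)

/-- The number of edges (with multiplicity) with both endpoints in `S`. -/
def edgesIn [DecidableEq V] (G : V → V → ℕ) (S : Finset V) : ℕ :=
  (∑ v ∈ S, ∑ u ∈ S, G v u) / 2

/-- A proper `k`-edge-colouring: every copy of an edge gets a colour
(`(c u v).card = G u v`), symmetric, and edge copies sharing a vertex get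
distinct colours. -/
def IsProperEdgeColoring [Fintype V] (G : V → V → ℕ) (k : ℕ)
    (c : V → V → Finset (Fin k)) : Prop :=
  (∀ u v, c u v = c v u) ∧ (∀ u v, (c u v).card = G u v) ∧
    ∀ v u w, u ≠ w → Disjoint (c v u) (c v w)

/-- `G` admits a proper `k`-edge-colouring. -/
def Colorable [Fintype V] (G : V → V → ℕ) (k : ℕ) : Prop :=
  ∃ c : V → V → Finset (Fin k), IsProperEdgeColoring G k c

/-- The chromatic index `χ'(G)`. -/
noncomputable def chromIndex [Fintype V] (G : V → V → ℕ) : ℕ :=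
  sInf {k | Colorable G k}

/-- `ρ(S) = e(G[S]) / ⌊|S|/2⌋`. -/
noncomputable def rhoS [DecidableEq V] (G : V → V → ℕ) (S : Finset V) : ℝ :=
  (edgesIn G S : ℝ) / ((S.card / 2 : ℕ) : ℝ)

/-- `ρ(G)`, the maximum of `ρ(S)` over all `S` with `|S| ≥ 2`. -/
noncomputable def rho [Fintype V] [DecidableEq V] (G : V → V → ℕ) : ℝ :=
  sSup {r : ℝ | ∃ S : Finset V, 2 ≤ S.card ∧ r = rhoS G S}

/-- The maximum edge multiplicity `μ(G)`. -/
def muMax [Fintype V] [DecidableEq V] (G : V → V → ℕ) : ℕ :=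
  Finset.univ.sup fun p : V × V => if p.1 = p.2 then 0 else G p.1 p.2

/-- The minimum edge multiplicity `μ_min(G)` (over pairs of distinct vertices). -/
noncomputable def muMin (G : V → V → ℕ) : ℕ :=
  sInf {t | ∃ u v : V, u ≠ v ∧ G u v = t}

/-- The second largest degree `d₂`. -/
def secondDeg [Fintype V] [DecidableEq V] (G : V → V → ℕ) : ℕ :=
  Finset.univ.sup fun p : V × V => if p.1 = p.2 then 0 else min (mdeg G p.1) (mdeg G p.2)

/-- Unordered pairs of distinct vertices of `[n]`. -/
abbrev NDPair (n : ℕ) := {p : Sym2 (Fin n) // ¬ p.IsDiag}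

/-- An outcome of the random multigraph process `M(n,m)`: a choice of one of
the pairs for each of the `m` rounds. -/
abbrev MGOutcome (n m : ℕ) := Fin m → NDPair n

/-- The multiplicity function of the multigraph produced by an outcome. -/
def mgGraph {n m : ℕ} (ω : MGOutcome n m) : Fin n → Fin n → ℕ := fun u v =>
  (Finset.univ.filter fun i => (ω i : Sym2 (Fin n)) = s(u, v)).card

/-- The number of times the pair `p` was chosen. -/
def pairCount {n m : ℕ} (ω : MGOutcome n m) (p : NDPair n) : ℕ :=
  (Finset.univ.filter fun i => ω i = p).card

/-- The probability, under the uniform measure `M(n,m)`, of the event `P`. -/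
noncomputable def mgProb (n m : ℕ) (P : MGOutcome n m → Prop) : ℝ :=
  (Nat.card {ω : MGOutcome n m // P ω} : ℝ) / (Nat.card (MGOutcome n m) : ℝ)

end GS

open GS Filter

set_option linter.unusedSectionVars false

namespace GSP
open Finset

variable {V : Type*} [Fintype V] [DecidableEq V] {k : ℕ}

structure Pc (k : ℕ) (c : V → V → Finset (Fin k)) : Prop where
  symm : ∀ u v, c u v = c v u
  diag : ∀ v, c v v = ∅
  disj : ∀ v u w, u ≠ w → Disjoint (c v u) (c v w)

def used (c : V → V → Finset (Fin k)) (z : V) : Finset (Fin k) := univ.biUnion (c z)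

def fr (c : V → V → Finset (Fin k)) (z : V) : Finset (Fin k) := univ \ used c z

def dC (c : V → V → Finset (Fin k)) (z : V) : ℕ := ∑ u, (c z u).card

lemma mem_used {c : V → V → Finset (Fin k)} {z : V} {a : Fin k} :
    a ∈ used c z ↔ ∃ w, a ∈ c z w := by
  simp [used]

lemma mem_fr {c : V → V → Finset (Fin k)} {z : V} {a : Fin k} :
    a ∈ fr c z ↔ ∀ w, a ∉ c z w := by
  simp [fr, used]

lemma used_card (hc : Pc k c) (z : V) : (used c z).card = dC c z := by
  refine Finset.card_biUnion ?_
  intro u _ w _ huw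
  exact hc.disj z u w huw

lemma fr_card (hc : Pc k c) (z : V) : (fr c z).card = k - dC c z := by
  rw [fr, Finset.card_sdiff_of_subset (Finset.subset_univ _), Finset.card_univ,
    Fintype.card_fin, used_card hc]

lemma dC_le (hc : Pc k c) (z : V) : dC c z ≤ k := by
  rw [← used_card hc]
  simpa using Finset.card_le_card (Finset.subset_univ (used c z))

lemma unique_use (hc : Pc k c) {z w w' : V} {a : Fin k}
    (h1 : a ∈ c z w) (h2 : a ∈ c z w') : w = w' := by
  by_contra hne
  exact (hc.disj z w w' hne).forall_ne_finset h1 h2 rfl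

/-- index bump for adding one copy of edge (x,y₀). -/
def bump (x y₀ u v : V) : ℕ := if (u = x ∧ v = y₀) ∨ (u = y₀ ∧ v = x) then 1 else 0

def Ext (c : V → V → Finset (Fin k)) (x y₀ : V) : Prop :=
  ∃ c' : V → V → Finset (Fin k), Pc k c' ∧
    ∀ u v, (c' u v).card = (c u v).card + bump x y₀ u v

lemma ext_congr {c c₁ : V → V → Finset (Fin k)} {x y₀ : V}
    (h : ∀ u v, (c₁ u v).card = (c u v).card) (he : Ext c₁ x y₀) : Ext c x y₀ := by
  obtain ⟨c', hp, hcard⟩ := he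
  exact ⟨c', hp, fun u v => by rw [hcard u v, h u v]⟩


/-- add one copy of color `g` on pair (x,y). -/
def addC (c : V → V → Finset (Fin k)) (x y : V) (g : Fin k) : V → V → Finset (Fin k) :=
  fun u v => if (u = x ∧ v = y) ∨ (u = y ∧ v = x) then insert g (c u v) else c u v

lemma addC_eq_of_ne {c : V → V → Finset (Fin k)} {x y u v : V} {g : Fin k}
    (h : ¬ ((u = x ∧ v = y) ∨ (u = y ∧ v = x))) : addC c x y g u v = c u v := if_neg h

lemma addC_pc (hc : Pc k c) {x y : V} {g : Fin k} (hxy : x ≠ y)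
    (hx : g ∈ fr c x) (hy : g ∈ fr c y) : Pc k (addC c x y g) := by
  have hgx : ∀ w, g ∉ c x w := mem_fr.1 hx
  have hgy : ∀ w, g ∉ c y w := mem_fr.1 hy
  constructor
  · intro u v
    unfold addC
    by_cases h : (u = x ∧ v = y) ∨ (u = y ∧ v = x)
    · rw [if_pos h, if_pos (by tauto), hc.symm]
    · rw [if_neg h, if_neg (by tauto), hc.symm]
  · intro v
    unfold addC
    rw [if_neg (by rintro (⟨rfl, rfl⟩ | ⟨rfl, rfl⟩) <;> exact hxy rfl), hc.diag]
  · intro v u w huw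
    unfold addC
    by_cases h1 : (v = x ∧ u = y) ∨ (v = y ∧ u = x) <;>
      by_cases h2 : (v = x ∧ w = y) ∨ (v = y ∧ w = x)
    · exfalso
      rcases h1 with ⟨rfl, rfl⟩ | ⟨rfl, rfl⟩ <;> rcases h2 with ⟨h2a, rfl⟩ | ⟨h2a, rfl⟩ <;>
        first | exact huw rfl | exact hxy (by tauto)
    · rw [if_pos h1, if_neg h2]
      refine Finset.disjoint_insert_left.2 ⟨?_, hc.disj v u w huw⟩
      rcases h1 with ⟨rfl, rfl⟩ | ⟨rfl, rfl⟩
      · exact hgx w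
      · exact hgy w
    · rw [if_neg h1, if_pos h2]
      refine Finset.disjoint_insert_right.2 ⟨?_, hc.disj v u w huw⟩
      rcases h2 with ⟨rfl, rfl⟩ | ⟨rfl, rfl⟩
      · exact hgx u
      · exact hgy u
    · rw [if_neg h1, if_neg h2]; exact hc.disj v u w huw

lemma addC_card (hc : Pc k c) {x y : V} {g : Fin k}
    (hx : g ∈ fr c x) (hy : g ∈ fr c y) (u v : V) :
    ((addC c x y g) u v).card = (c u v).card +
      (if (u = x ∧ v = y) ∨ (u = y ∧ v = x) then 1 else 0) := by
  unfold addC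
  by_cases h : (u = x ∧ v = y) ∨ (u = y ∧ v = x)
  · rw [if_pos h, if_pos h, Finset.card_insert_of_notMem]
    intro hmem
    rcases h with ⟨hu, hv⟩ | ⟨hu, hv⟩ <;> subst hu <;> subst hv
    · exact mem_fr.1 hx _ hmem
    · rw [hc.symm _ _] at hmem; exact mem_fr.1 hx _ hmem
  · rw [if_neg h, if_neg h, Nat.add_zero]

/-- replace one copy of color `b` by `g` on pair (x,w). -/
def moveC (c : V → V → Finset (Fin k)) (x w : V) (b g : Fin k) : V → V → Finset (Fin k) :=
  fun u v => if (u = x ∧ v = w) ∨ (u = w ∧ v = x) then insert g ((c u v).erase b) else c u v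

lemma moveC_eq_of_ne {c : V → V → Finset (Fin k)} {x w u v : V} {b g : Fin k}
    (h : ¬ ((u = x ∧ v = w) ∨ (u = w ∧ v = x))) : moveC c x w b g u v = c u v := if_neg h

section move
variable {c : V → V → Finset (Fin k)} {x w : V} {b g : Fin k}

lemma moveC_pc (hc : Pc k c) (hxw : x ≠ w) (hb : b ∈ c x w)
    (hx : g ∈ fr c x) (hw : g ∈ fr c w) : Pc k (moveC c x w b g) := by
  have hgx : ∀ z, g ∉ c x z := mem_fr.1 hx
  have hgw : ∀ z, g ∉ c w z := mem_fr.1 hw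
  constructor
  · intro u v
    unfold moveC
    by_cases h : (u = x ∧ v = w) ∨ (u = w ∧ v = x)
    · rw [if_pos h, if_pos (by tauto), hc.symm]
    · rw [if_neg h, if_neg (by tauto), hc.symm]
  · intro v
    unfold moveC
    rw [if_neg (by rintro (⟨rfl, rfl⟩ | ⟨rfl, rfl⟩) <;> exact hxw rfl), hc.diag]
  · intro v u u' huu'
    unfold moveC
    by_cases h1 : (v = x ∧ u = w) ∨ (v = w ∧ u = x) <;>
      by_cases h2 : (v = x ∧ u' = w) ∨ (v = w ∧ u' = x)
    · exfalso
      rcases h1 with ⟨rfl, rfl⟩ | ⟨rfl, rfl⟩ <;> rcases h2 with ⟨h2a, rfl⟩ | ⟨h2a, rfl⟩ <;>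
        first | exact huu' rfl | exact hxw (by tauto)
    · rw [if_pos h1, if_neg h2]
      refine Finset.disjoint_insert_left.2 ⟨?_, Finset.disjoint_of_subset_left
        (Finset.erase_subset _ _) (hc.disj v u u' huu')⟩
      rcases h1 with ⟨rfl, rfl⟩ | ⟨rfl, rfl⟩
      · exact hgx u'
      · exact hgw u'
    · rw [if_neg h1, if_pos h2]
      refine Finset.disjoint_insert_right.2 ⟨?_, Finset.disjoint_of_subset_right
        (Finset.erase_subset _ _) (hc.disj v u u' huu')⟩
      rcases h2 with ⟨rfl, rfl⟩ | ⟨rfl, rfl⟩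
      · exact hgx u
      · exact hgw u
    · rw [if_neg h1, if_neg h2]; exact hc.disj v u u' huu'

lemma moveC_card (hc : Pc k c) (hb : b ∈ c x w) (hx : g ∈ fr c x) (u v : V) :
    ((moveC c x w b g) u v).card = (c u v).card := by
  unfold moveC
  by_cases h : (u = x ∧ v = w) ∨ (u = w ∧ v = x)
  · have hbuv : b ∈ c u v := by
      rcases h with ⟨rfl, rfl⟩ | ⟨rfl, rfl⟩
      · exact hb
      · rw [hc.symm]; exact hb
    have hguv : g ∉ (c u v).erase b := by
      intro hmem
      have := Finset.mem_of_mem_erase hmem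
      rcases h with ⟨rfl, rfl⟩ | ⟨rfl, rfl⟩
      · exact mem_fr.1 hx v this
      · rw [hc.symm] at this; exact mem_fr.1 hx u this
    rw [if_pos h, Finset.card_insert_of_notMem hguv,
      Finset.card_erase_of_mem hbuv]
    have : 0 < (c u v).card := Finset.card_pos.2 ⟨b, hbuv⟩
    omega
  · rw [if_neg h]

end move


section move
variable {c : V → V → Finset (Fin k)} {x w : V} {b g : Fin k}

lemma fr_moveC_of_ne {z : V} (hzx : z ≠ x) (hzw : z ≠ w) :
    fr (moveC c x w b g) z = fr c z := by
  have : ∀ v, moveC c x w b g z v = c z v := by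
    intro v
    exact moveC_eq_of_ne (by tauto)
  ext a
  simp only [mem_fr, this]

lemma moveC_b_fr_x (hc : Pc k c) (hxw : x ≠ w) (hb : b ∈ c x w) (hg : g ∈ fr c x) :
    b ∈ fr (moveC c x w b g) x := by
  have hgb : g ≠ b := by
    intro h; exact mem_fr.1 hg w (h ▸ hb)
  rw [mem_fr]
  intro v
  unfold moveC
  by_cases h : (x = x ∧ v = w) ∨ (x = w ∧ v = x)
  · rw [if_pos h]
    have hvw : v = w := by tauto
    subst hvw
    simp [Finset.mem_insert, hgb.symm]
  · rw [if_neg h]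
    intro hmem
    have hvw : v ≠ w := by tauto
    exact hvw (unique_use hc hmem hb)

end move

/-- A fan at `x` of length `t`: vertices `y 0, …, y t` distinct and ≠ x, and for
`1 ≤ l ≤ t` the color `b l` is free at `y (f l)` with `f l < l`, and appears on the
pair `(x, y l)`. -/
def IsFan (c : V → V → Finset (Fin k)) (x : V) (t : ℕ) (y : ℕ → V) (f : ℕ → ℕ)
    (b : ℕ → Fin k) : Prop :=
  (∀ i ≤ t, ∀ j ≤ t, y i = y j → i = j) ∧ (∀ i ≤ t, y i ≠ x) ∧
    ∀ l, 1 ≤ l → l ≤ t → f l < l ∧ b l ∈ fr c (y (f l)) ∧ b l ∈ c x (y l)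

lemma isFan_mono {c : V → V → Finset (Fin k)} {x : V} {t t' : ℕ} {y f b}
    (h : IsFan c x t y f b) (ht : t' ≤ t) : IsFan c x t' y f b :=
  ⟨fun i hi j hj => h.1 i (hi.trans ht) j (hj.trans ht),
   fun i hi => h.2.1 i (hi.trans ht),
   fun l h1 h2 => h.2.2 l h1 (h2.trans ht)⟩

lemma shift {x : V} : ∀ (t : ℕ) (c : V → V → Finset (Fin k)), Pc k c →
    ∀ (y : ℕ → V) (f : ℕ → ℕ) (b : ℕ → Fin k), IsFan c x t y f b →
    ∀ j, j ≤ t → ∀ g : Fin k, g ∈ fr c x → g ∈ fr c (y j) → Ext c x (y 0) := by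
  intro t
  induction t with
  | zero =>
    intro c hc y f b hfan j hj g hgx hgy
    interval_cases j
    refine ⟨addC c x (y 0) g, addC_pc hc (Ne.symm (hfan.2.1 0 le_rfl)) hgx hgy, ?_⟩
    intro u v
    rw [addC_card hc hgx hgy u v]
    rfl
  | succ t ih =>
    intro c hc y f b hfan j hj g hgx hgy
    rcases Nat.lt_or_ge j (t+1) with hj' | hj'
    · exact ih c hc y f b (isFan_mono hfan (Nat.le_succ t)) j (Nat.lt_succ_iff.1 hj') g hgx hgy
    · have hj2 : j = t + 1 := le_antisymm hj hj'
      subst hj2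
      obtain ⟨hflt, hbfr, hbc⟩ := hfan.2.2 (t+1) (Nat.le_add_left 1 t) le_rfl
      set w := y (t+1) with hw
      have hxw : x ≠ w := Ne.symm (hfan.2.1 (t+1) le_rfl)
      set c₁ := moveC c x w (b (t+1)) g with hc₁
      have hp1 : Pc k c₁ := moveC_pc hc hxw hbc hgx hgy
      have hcards : ∀ u v, (c₁ u v).card = (c u v).card :=
        moveC_card hc hbc hgx
      have hyne : ∀ l ≤ t, y l ≠ w := by
        intro l hl h
        have := hfan.1 l (hl.trans (Nat.le_succ t)) (t+1) le_rfl h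
        omega
      have hfrne : ∀ l ≤ t, fr c₁ (y l) = fr c (y l) := by
        intro l hl
        exact fr_moveC_of_ne (hfan.2.1 l (hl.trans (Nat.le_succ t))) (hyne l hl)
      have hfan1 : IsFan c₁ x t y f b := by
        refine ⟨fun i hi j' hj' => hfan.1 i (hi.trans (Nat.le_succ t)) j'
          (hj'.trans (Nat.le_succ t)), fun i hi => hfan.2.1 i (hi.trans (Nat.le_succ t)), ?_⟩
        intro l h1 h2
        obtain ⟨a1, a2, a3⟩ := hfan.2.2 l h1 (h2.trans (Nat.le_succ t))
        refine ⟨a1, ?_, ?_⟩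
        · rw [hfrne (f l) (by omega)]; exact a2
        · rw [hc₁, moveC_eq_of_ne]
          · exact a3
          · push_neg
            constructor
            · intro _; exact hyne l h2
            · intro hxww; exact absurd hxww hxw
      have hext : Ext c₁ x (y 0) := by
        refine ih c₁ hp1 y f b hfan1 (f (t+1)) (by omega) (b (t+1)) ?_ ?_
        · exact moveC_b_fr_x hc hxw hbc hgx
        · rw [hfrne (f (t+1)) (by omega)]; exact hbfr
      exact ext_congr hcards hext


/-! ### Kempe swaps -/

/-- `S` is closed for colors `a, b`: no `a`- or `b`-edge leaves `S`. -/
def IsClosed (c : V → V → Finset (Fin k)) (S : Finset V) (a b : Fin k) : Prop :=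
  ∀ u ∈ S, ∀ v, v ∉ S → a ∉ c u v ∧ b ∉ c u v

/-- swap the colors `a, b` inside `S`. -/
def swapC (c : V → V → Finset (Fin k)) (S : Finset V) (a b : Fin k) :
    V → V → Finset (Fin k) :=
  fun u v => if u ∈ S ∧ v ∈ S then (c u v).image (Equiv.swap a b) else c u v

section swap
variable {c : V → V → Finset (Fin k)} {S : Finset V} {a b : Fin k}

lemma swap_mem_image {s : Finset (Fin k)} {g : Fin k} :
    g ∈ s.image (Equiv.swap a b) ↔ Equiv.swap a b g ∈ s := by
  constructor
  · rintro h
    obtain ⟨d, hd, hdg⟩ := Finset.mem_image.1 h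
    rwa [← hdg, Equiv.swap_apply_self]
  · intro h
    exact Finset.mem_image.2 ⟨_, h, Equiv.swap_apply_self a b g⟩

lemma swap_mem_image_of_notin {s : Finset (Fin k)} {g : Fin k}
    (hg : g ≠ a) (hg' : g ≠ b) : g ∈ s.image (Equiv.swap a b) ↔ g ∈ s := by
  rw [swap_mem_image, Equiv.swap_apply_of_ne_of_ne hg hg']

lemma swapC_eq_of_not_mem_left {u v : V} (hu : u ∉ S) : swapC c S a b u v = c u v :=
  if_neg (by tauto)

lemma swapC_eq_of_not_mem_right {u v : V} (hv : v ∉ S) : swapC c S a b u v = c u v :=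
  if_neg (by tauto)

lemma swapC_pc (hc : Pc k c) (hS : IsClosed c S a b) : Pc k (swapC c S a b) := by
  constructor
  · intro u v
    unfold swapC
    by_cases h : u ∈ S ∧ v ∈ S
    · rw [if_pos h, if_pos (by tauto), hc.symm]
    · rw [if_neg h, if_neg (by tauto), hc.symm]
  · intro v
    unfold swapC
    by_cases h : v ∈ S ∧ v ∈ S
    · rw [if_pos h, hc.diag, Finset.image_empty]
    · rw [if_neg h, hc.diag]
  · intro v u w huw
    unfold swapC
    by_cases hv : v ∈ S
    · by_cases hu : u ∈ S <;> by_cases hw : w ∈ S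
      · rw [if_pos ⟨hv, hu⟩, if_pos ⟨hv, hw⟩]
        exact Finset.disjoint_image (Equiv.swap a b).injective |>.2 (hc.disj v u w huw)
      · rw [if_pos ⟨hv, hu⟩, if_neg (by tauto)]
        rw [Finset.disjoint_left]
        intro g hg1 hg2
        have hga : g ≠ a := fun h => ((hS v hv w hw).1 (h ▸ hg2)).elim
        have hgb : g ≠ b := fun h => ((hS v hv w hw).2 (h ▸ hg2)).elim
        rw [swap_mem_image_of_notin hga hgb] at hg1
        exact (hc.disj v u w huw).forall_ne_finset hg1 hg2 rfl
      · rw [if_neg (by tauto), if_pos ⟨hv, hw⟩]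
        rw [Finset.disjoint_left]
        intro g hg1 hg2
        have hga : g ≠ a := fun h => ((hS v hv u hu).1 (h ▸ hg1)).elim
        have hgb : g ≠ b := fun h => ((hS v hv u hu).2 (h ▸ hg1)).elim
        rw [swap_mem_image_of_notin hga hgb] at hg2
        exact (hc.disj v u w huw).forall_ne_finset hg1 hg2 rfl
      · rw [if_neg (by tauto), if_neg (by tauto)]
        exact hc.disj v u w huw
    · rw [if_neg (by tauto), if_neg (by tauto)]
      exact hc.disj v u w huw

lemma swapC_card (u v : V) : ((swapC c S a b) u v).card = (c u v).card := by
  unfold swapC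
  by_cases h : u ∈ S ∧ v ∈ S
  · rw [if_pos h, Finset.card_image_of_injective _ (Equiv.swap a b).injective]
  · rw [if_neg h]

lemma fr_swapC_of_not_mem {z : V} (hz : z ∉ S) : fr (swapC c S a b) z = fr c z := by
  ext g
  simp only [mem_fr]
  constructor <;> intro h w
  · have := h w; rwa [swapC_eq_of_not_mem_left hz] at this
  · rw [swapC_eq_of_not_mem_left hz]; exact h w

lemma fr_swapC_of_mem (hS : IsClosed c S a b) {z : V} (hz : z ∈ S) {g : Fin k} :
    g ∈ fr (swapC c S a b) z ↔ Equiv.swap a b g ∈ fr c z := by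
  simp only [mem_fr]
  constructor <;> intro h w <;> have hw := h w
  · by_cases hwS : w ∈ S
    · intro hmem
      apply hw
      unfold swapC
      rw [if_pos ⟨hz, hwS⟩, swap_mem_image]
      exact hmem
    · rw [swapC_eq_of_not_mem_right hwS] at hw
      intro hmem
      rcases Equiv.swap_apply_def a b g ▸ hmem with _
      by_cases hga : g = a
      · exact (hS z hz w hwS).2 (by simpa [hga] using hmem)
      · by_cases hgb : g = b
        · exact (hS z hz w hwS).1 (by simpa [hga, hgb] using hmem)
        · rw [Equiv.swap_apply_of_ne_of_ne hga hgb] at hmem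
          exact hw hmem
  · intro hmem
    unfold swapC at hmem
    by_cases hwS : w ∈ S
    · rw [if_pos ⟨hz, hwS⟩, swap_mem_image] at hmem
      exact hw hmem
    · rw [if_neg (by tauto)] at hmem
      by_cases hga : g = a
      · exact (hS z hz w hwS).1 (hga ▸ hmem)
      · by_cases hgb : g = b
        · exact (hS z hz w hwS).2 (hgb ▸ hmem)
        · exact hw (by rwa [Equiv.swap_apply_of_ne_of_ne hga hgb])

end swap


/-! ### components of the `{a,b}`-subgraph -/

/-- adjacency in the subgraph of colors `a, b`. -/
def RR (c : V → V → Finset (Fin k)) (a b : Fin k) (u v : V) : Prop :=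
  u ≠ v ∧ (c u v ∩ {a, b}).Nonempty

lemma RR_symm (hc : Pc k c) {a b : Fin k} : Symmetric (RR c a b) := by
  intro u v ⟨h1, h2⟩
  exact ⟨h1.symm, by rwa [hc.symm v u]⟩

/-- the component of `z` in the `{a,b}`-subgraph. -/
noncomputable def comp (c : V → V → Finset (Fin k)) (a b : Fin k) (z : V) : Finset V :=
  @Finset.filter _ (fun w => Relation.ReflTransGen (RR c a b) z w) (Classical.decPred _) univ

section comp
variable {c : V → V → Finset (Fin k)} {a b : Fin k} {z : V}

lemma mem_comp {w : V} : w ∈ comp c a b z ↔ Relation.ReflTransGen (RR c a b) z w := by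
  simp [comp]

lemma self_mem_comp : z ∈ comp c a b z := mem_comp.2 Relation.ReflTransGen.refl

lemma mem_comp_comm (hc : Pc k c) {w : V} : w ∈ comp c a b z ↔ z ∈ comp c a b w := by
  rw [mem_comp, mem_comp]
  constructor <;> intro h <;>
    exact (@Relation.ReflTransGen.symmetric _ _ ⟨fun x y h => RR_symm hc h⟩).symm _ _ h

lemma comp_eq_of_mem (hc : Pc k c) {q : V} (hq : q ∈ comp c a b z) :
    comp c a b q = comp c a b z := by
  ext w
  rw [mem_comp, mem_comp]
  have hzq : Relation.ReflTransGen (RR c a b) z q := mem_comp.1 hq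
  have hqz := (@Relation.ReflTransGen.symmetric _ _ ⟨fun x y h => RR_symm hc h⟩).symm _ _ hzq
  exact ⟨fun h => hzq.trans h, fun h => hqz.trans h⟩

lemma comp_closed (hc : Pc k c) : IsClosed c (comp c a b z) a b := by
  intro u hu v hv
  constructor <;> intro hmem <;> apply hv <;>
    refine mem_comp.2 ((mem_comp.1 hu).tail ⟨?_, ⟨_, Finset.mem_inter.2 ⟨hmem, by simp⟩⟩⟩)
  · intro h; subst h; rw [hc.diag] at hmem; exact absurd hmem (Finset.notMem_empty _)
  · intro h; subst h; rw [hc.diag] at hmem; exact absurd hmem (Finset.notMem_empty _)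

/-- distance layers in the `{a,b}`-subgraph. -/
def Nbd (c : V → V → Finset (Fin k)) (a b : Fin k) (z : V) : ℕ → V → Prop
  | 0 => fun u => u = z
  | (n+1) => fun u => ∃ p, Nbd c a b z n p ∧ RR c a b p u

lemma nbd_exists {u : V} (hu : u ∈ comp c a b z) : ∃ n, Nbd c a b z n u := by
  have h := mem_comp.1 hu
  clear hu
  induction h with
  | refl => exact ⟨0, rfl⟩
  | tail _ hstep ih => obtain ⟨n, hn⟩ := ih; exact ⟨n + 1, _, hn, hstep⟩

lemma nbd_mem_comp : ∀ n (u : V), Nbd c a b z n u → u ∈ comp c a b z := by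
  intro n
  induction n with
  | zero => intro u hu; rw [hu]; exact self_mem_comp
  | succ n ih =>
    rintro u ⟨p, hp, hstep⟩
    exact mem_comp.2 ((mem_comp.1 (ih p hp)).tail hstep)

open Classical in
/-- distance from `z`. -/
noncomputable def ndist (c : V → V → Finset (Fin k)) (a b : Fin k) (z u : V) : ℕ :=
  if h : ∃ n, Nbd c a b z n u then Nat.find h else 0

open Classical in
noncomputable def npar (c : V → V → Finset (Fin k)) (a b : Fin k) (z u : V) : V :=
  if h : ∃ p, Nbd c a b z (ndist c a b z u - 1) p ∧ RR c a b p u then Classical.choose h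
  else u

lemma npar_spec {u : V} (hu : u ∈ comp c a b z) (huz : u ≠ z) :
    npar c a b z u ∈ comp c a b z ∧ RR c a b (npar c a b z u) u ∧
      ndist c a b z (npar c a b z u) < ndist c a b z u := by
  classical
  have hex : ∃ n, Nbd c a b z n u := nbd_exists hu
  have hd : ndist c a b z u = Nat.find hex := by
    rw [ndist, dif_pos hex]
  have hnbd : Nbd c a b z (Nat.find hex) u := Nat.find_spec hex
  have hpos : Nat.find hex ≠ 0 := by
    intro h0
    rw [h0] at hnbd
    exact huz hnbd
  obtain ⟨m, hm⟩ := Nat.exists_eq_succ_of_ne_zero hpos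
  rw [hm] at hnbd
  have hnbd' : ∃ p, Nbd c a b z (ndist c a b z u - 1) p ∧ RR c a b p u := by
    rw [hd, hm]
    simp only [Nat.succ_sub_one]
    exact hnbd
  have hps := Classical.choose_spec hnbd'
  rw [npar, dif_pos hnbd']
  obtain ⟨hp1, hp2⟩ := hps
  refine ⟨nbd_mem_comp _ _ hp1, hp2, ?_⟩
  have hexp : ∃ n, Nbd c a b z n (Classical.choose hnbd') := ⟨_, hp1⟩
  have : ndist c a b z (Classical.choose hnbd') ≤ ndist c a b z u - 1 := by
    rw [ndist, dif_pos hexp]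
    exact Nat.find_le hp1
  omega

end comp


section defic
variable {c : V → V → Finset (Fin k)} {a b : Fin k} {z₀ : V}

lemma card_inter_pair {a b : Fin k} (hab : a ≠ b) (s : Finset (Fin k)) :
    (s ∩ {a, b}).card = (if a ∈ s then 1 else 0) + (if b ∈ s then 1 else 0) := by
  rw [Finset.inter_comm, ← Finset.filter_mem_eq_inter]
  by_cases ha : a ∈ s <;> by_cases hb : b ∈ s <;>
    simp [Finset.filter_insert, Finset.filter_singleton, ha, hb,
      Finset.card_insert_of_notMem, hab]

/-- The total deficiency of a component is at most 2. -/
lemma defic_le (hc : Pc k c) (hab : a ≠ b) (z₀ : V) :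
    ∑ u ∈ comp c a b z₀,
      ((if a ∈ fr c u then 1 else 0) + (if b ∈ fr c u then 1 else 0)) ≤ 2 := by
  classical
  set S := comp c a b z₀ with hS
  set X : Finset (Fin k) := {a, b} with hX
  -- Step B: per-vertex degree sum
  have hB : ∀ u ∈ S, (used c u ∩ X).card = ∑ w ∈ S, (c u w ∩ X).card := by
    intro u hu
    have h1 : used c u ∩ X = univ.biUnion (fun w => c u w ∩ X) := by
      ext g
      simp only [Finset.mem_inter, mem_used, Finset.mem_biUnion, Finset.mem_univ, true_and]
      tauto
    have h2 : (univ.biUnion (fun w => c u w ∩ X)).card = ∑ w, (c u w ∩ X).card := by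
      refine Finset.card_biUnion ?_
      intro w _ w' _ hww'
      exact Finset.disjoint_of_subset_left (Finset.inter_subset_left)
        (Finset.disjoint_of_subset_right (Finset.inter_subset_left) (hc.disj u w w' hww'))
    rw [h1, h2]
    refine (Finset.sum_subset (Finset.subset_univ S) ?_).symm
    intro w _ hw
    have hcl := comp_closed hc (a := a) (b := b) (z := z₀) u hu w hw
    rw [Finset.card_eq_zero]
    ext g
    simp only [Finset.mem_inter, Finset.notMem_empty, iff_false, hX, Finset.mem_insert,
      Finset.mem_singleton]
    rintro ⟨hg, rfl | rfl⟩
    · exact hcl.1 hg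
    · exact hcl.2 hg
  -- Step C: many edges inside the component
  have hC : 2 * (S.card - 1) ≤ ∑ u ∈ S, ∑ w ∈ S, (c u w ∩ X).card := by
    set P : Finset (V × V) :=
      @Finset.filter _ (fun p => RR c a b p.1 p.2) (Classical.decPred _) (S ×ˢ S) with hP
    have hPcard : 2 * (S.card - 1) ≤ P.card := by
      have hz₀S : z₀ ∈ S := self_mem_comp
      set D : Finset (V × Bool) := (S.erase z₀) ×ˢ (univ : Finset Bool) with hD
      have hDcard : D.card = (S.card - 1) * 2 := by
        rw [hD, Finset.card_product, Finset.card_erase_of_mem hz₀S, Finset.card_univ]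
        simp
      set F : V × Bool → V × V :=
        fun p => if p.2 then (p.1, npar c a b z₀ p.1) else (npar c a b z₀ p.1, p.1) with hF
      have hmaps : ∀ p ∈ D, F p ∈ P := by
        rintro ⟨u, i⟩ hp
        rw [hD, Finset.mem_product] at hp
        have hu : u ∈ S := Finset.mem_of_mem_erase hp.1
        have huz : u ≠ z₀ := Finset.ne_of_mem_erase hp.1
        obtain ⟨hp1, hp2, _⟩ := npar_spec hu huz
        have hp2' := RR_symm hc hp2
        rw [hP, Finset.mem_filter]
        cases i <;> simp only [hF, Bool.false_eq_true, if_false, if_true] <;>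
          exact ⟨Finset.mem_product.2 ⟨by assumption, by assumption⟩, by assumption⟩
      have hinj : Set.InjOn F D := by
        rintro ⟨u, i⟩ hu' ⟨u', i'⟩ hu'' heq
        rw [hD, Finset.coe_product] at hu' hu''
        obtain ⟨hu1, _⟩ := hu'
        obtain ⟨hu1', _⟩ := hu''
        simp only [Finset.coe_erase, Set.mem_diff, Finset.mem_coe, Set.mem_singleton_iff] at hu1 hu1'
        have hnd := (npar_spec hu1.1 hu1.2).2.2
        have hnd' := (npar_spec hu1'.1 hu1'.2).2.2
        cases i <;> cases i' <;>
          simp only [hF, Bool.false_eq_true, if_false, if_true, Prod.mk.injEq] at heq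
        · exact Prod.ext heq.2 rfl
        · exfalso
          rw [heq.1] at hnd
          rw [← heq.2] at hnd'
          omega
        · exfalso
          rw [heq.2] at hnd
          rw [← heq.1] at hnd'
          omega
        · exact Prod.ext heq.1 rfl
      have := Finset.card_le_card_of_injOn F hmaps hinj
      omega
    have h1 : ∑ p ∈ P, 1 ≤ ∑ p ∈ P, (c p.1 p.2 ∩ X).card := by
      refine Finset.sum_le_sum ?_
      rintro ⟨u, w⟩ hp
      rw [hP, Finset.mem_filter] at hp
      obtain ⟨-, -, g, hg⟩ := hp
      exact Finset.card_pos.2 ⟨g, hg⟩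
    have h2 : ∑ p ∈ P, (c p.1 p.2 ∩ X).card ≤ ∑ p ∈ S ×ˢ S, (c p.1 p.2 ∩ X).card := by
      refine Finset.sum_le_sum_of_subset (Finset.filter_subset _ _)
    have h3 : ∑ p ∈ S ×ˢ S, (c p.1 p.2 ∩ X).card = ∑ u ∈ S, ∑ w ∈ S, (c u w ∩ X).card :=
      Finset.sum_product' S S (fun u w => (c u w ∩ X).card)
    simp only [Finset.sum_const, smul_eq_mul, mul_one] at h1
    omega
  -- Step A: pointwise deficiency identity
  have hA : ∀ u, ((if a ∈ fr c u then 1 else 0) + (if b ∈ fr c u then 1 else 0))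
      + (used c u ∩ X).card = 2 := by
    intro u
    have hfu : ∀ g : Fin k, g ∈ fr c u ↔ g ∉ used c u := by
      intro g; simp [fr]
    simp only [hX, card_inter_pair hab, hfu]
    by_cases ha : a ∈ used c u <;> by_cases hb : b ∈ used c u <;> simp [ha, hb]
  have hsum : ∑ u ∈ S, (((if a ∈ fr c u then 1 else 0) + (if b ∈ fr c u then 1 else 0))
      + (used c u ∩ X).card) = 2 * S.card := by
    rw [Finset.sum_congr rfl (fun u _ => hA u), Finset.sum_const, smul_eq_mul, mul_comm]
  rw [Finset.sum_add_distrib] at hsum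
  have hused : ∑ u ∈ S, (used c u ∩ X).card = ∑ u ∈ S, ∑ w ∈ S, (c u w ∩ X).card :=
    Finset.sum_congr rfl hB
  have hz₀S : z₀ ∈ S := self_mem_comp
  have hScard : 1 ≤ S.card := Finset.card_pos.2 ⟨z₀, hz₀S⟩
  omega

end defic


section main
variable {c : V → V → Finset (Fin k)}

/-- Win a Kempe swap: swap a closed set avoiding `x` that flips `g`-freeness to
`a`-freeness at a fan vertex, then shift. -/
lemma win (hc : Pc k c) {x : V} {t : ℕ} {y : ℕ → V} {f : ℕ → ℕ} {b : ℕ → Fin k}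
    (hfan : IsFan c x t y f b) {a g : Fin k} (hax : a ∈ fr c x)
    {S' : Finset V} (hcl : IsClosed c S' a g) (hxS : x ∉ S')
    {jj : ℕ} (hjj : jj ≤ t) (hyjj : y jj ∈ S') (hgfree : g ∈ fr c (y jj))
    (hpres : ∀ l, 1 ≤ l → l ≤ jj → b l = g → y (f l) ∉ S') :
    Ext c x (y 0) := by
  set c' := swapC c S' a g with hc'
  have hp' : Pc k c' := swapC_pc hc hcl
  have hfan0 := isFan_mono hfan hjj
  have hfan' : IsFan c' x jj y f b := by
    refine ⟨hfan0.1, hfan0.2.1, ?_⟩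
    intro l h1 h2
    obtain ⟨flt, hfr2, hcx⟩ := hfan0.2.2 l h1 h2
    refine ⟨flt, ?_, ?_⟩
    · by_cases hm : y (f l) ∈ S'
      · have hba : b l ≠ a := by
          intro h
          exact mem_fr.1 hax (y l) (h ▸ hcx)
        have hbg : b l ≠ g := fun h => (hpres l h1 h2 h) hm
        rw [hc', fr_swapC_of_mem hcl hm, Equiv.swap_apply_of_ne_of_ne hba hbg]
        exact hfr2
      · rw [hc', fr_swapC_of_not_mem hm]
        exact hfr2
    · rw [hc', swapC_eq_of_not_mem_left hxS]
      exact hcx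
  have hax' : a ∈ fr c' x := by rw [hc', fr_swapC_of_not_mem hxS]; exact hax
  have hayjj : a ∈ fr c' (y jj) := by
    rw [hc', fr_swapC_of_mem hcl hyjj, Equiv.swap_apply_left]
    exact hgfree
  exact ext_congr (fun u v => swapC_card u v) (shift jj c' hp' y f b hfan' jj le_rfl a hax' hayjj)

/-- Build a maximal (closed) fan, or win. -/
lemma build (hc : Pc k c) {x y₀ : V} (hxy : x ≠ y₀) (noext : ¬ Ext c x y₀)
    (hfrx : (fr c x).Nonempty) :
    ∃ (t : ℕ) (y : ℕ → V) (f : ℕ → ℕ) (b : ℕ → Fin k), IsFan c x t y f b ∧ y 0 = y₀ ∧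
      ∀ j ≤ t, ∀ g ∈ fr c (y j), ∃ m ≤ t, g ∈ c x (y m) := by
  obtain ⟨g₀, hg₀⟩ := hfrx
  have key : ∀ (r t : ℕ) (y : ℕ → V) (f : ℕ → ℕ) (b : ℕ → Fin k),
      IsFan c x t y f b → y 0 = y₀ → Fintype.card V ≤ t + 1 + r →
      ∃ (t' : ℕ) (y' : ℕ → V) (f' : ℕ → ℕ) (b' : ℕ → Fin k),
        IsFan c x t' y' f' b' ∧ y' 0 = y₀ ∧
        ∀ j ≤ t', ∀ g ∈ fr c (y' j), ∃ m ≤ t', g ∈ c x (y' m) := by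
    intro r
    induction r with
    | zero =>
      intro t y f b hfan hy0 hcard
      exfalso
      have : t + 2 ≤ Fintype.card V := by
        have hinj : Set.InjOn y (Finset.range (t+1)) := by
          intro i hi j hj hij
          simp only [Finset.coe_range, Set.mem_Iio] at hi hj
          exact hfan.1 i (by omega) j (by omega) hij
        have hT : ((Finset.range (t+1)).image y).card = t + 1 := by
          rw [Finset.card_image_of_injOn hinj, Finset.card_range]
        have hxT : x ∉ (Finset.range (t+1)).image y := by
          intro hx
          obtain ⟨i, hi, hix⟩ := Finset.mem_image.1 hx
          exact hfan.2.1 i (by simpa using Nat.lt_succ_iff.1 (Finset.mem_range.1 hi)) hix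
        calc t + 2 = (insert x ((Finset.range (t+1)).image y)).card := by
              rw [Finset.card_insert_of_notMem hxT, hT]
          _ ≤ Fintype.card V := Finset.card_le_univ _
      omega
    | succ r ih =>
      intro t y f b hfan hy0 hcard
      by_cases hclosed : ∀ j ≤ t, ∀ g ∈ fr c (y j), ∃ m ≤ t, g ∈ c x (y m)
      · exact ⟨t, y, f, b, hfan, hy0, hclosed⟩
      · push_neg at hclosed
        obtain ⟨j, hj, g, hg, hnot⟩ := hclosed
        by_cases hw : ∃ w, g ∈ c x w
        · obtain ⟨w, hw⟩ := hw
          have hwx : w ≠ x := by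
            intro h
            rw [h, hc.diag] at hw
            exact absurd hw (Finset.notMem_empty _)
          have hwnew : ∀ m ≤ t, y m ≠ w := by
            intro m hm h
            exact hnot m hm (h ▸ hw)
          set y' : ℕ → V := fun i => if i = t+1 then w else y i with hy'
          set f' : ℕ → ℕ := fun i => if i = t+1 then j else f i with hf'
          set b' : ℕ → Fin k := fun i => if i = t+1 then g else b i with hb'
          have hfan' : IsFan c x (t+1) y' f' b' := by
            refine ⟨?_, ?_, ?_⟩
            · intro i hi j' hj' hij
              rcases Nat.lt_or_ge i (t+1) with hi' | hi' <;>
                rcases Nat.lt_or_ge j' (t+1) with hj'' | hj''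
              · have : y i = y j' := by
                  simpa [hy', Nat.ne_of_lt hi', Nat.ne_of_lt hj''] using hij
                exact hfan.1 i (by omega) j' (by omega) this
              · have hj3 : j' = t+1 := by omega
                exfalso
                apply hwnew i (by omega)
                simpa [hy', Nat.ne_of_lt hi', hj3] using hij
              · have hi3 : i = t+1 := by omega
                exfalso
                apply hwnew j' (by omega)
                simpa [hy', Nat.ne_of_lt hj'', hi3] using hij.symm
              · omega
            · intro i hi
              rcases Nat.lt_or_ge i (t+1) with hi' | hi'
              · simpa [hy', Nat.ne_of_lt hi'] using hfan.2.1 i (by omega)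
              · have : i = t+1 := by omega
                simpa [hy', this] using hwx
            · intro l h1 h2
              rcases Nat.lt_or_ge l (t+1) with hl | hl
              · obtain ⟨a1, a2, a3⟩ := hfan.2.2 l h1 (by omega)
                have e1 : l ≠ t + 1 := by omega
                have e2 : f l ≠ t + 1 := by omega
                simp only [hy', hf', hb', if_neg e1, if_neg e2]
                exact ⟨a1, a2, a3⟩
              · have hl3 : l = t+1 := by omega
                subst hl3
                have hyfl : y' (f' (t+1)) = y j := by
                  have : j < t + 1 := by omega
                  simp [hf', hy', Nat.ne_of_lt this]
                rw [hyfl]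
                refine ⟨by simp [hf']; omega, by simpa [hb'] using hg, ?_⟩
                simp [hb', hy']
                exact hw
          have hy0' : y' 0 = y₀ := by simpa [hy'] using hy0
          exact ih (t+1) y' f' b' hfan' hy0' (by omega)
        · push_neg at hw
          exfalso
          apply noext
          have hgx : g ∈ fr c x := mem_fr.2 hw
          have := shift t c hc y f b hfan j hj g hgx hg
          rwa [hy0] at this
  have hfan0 : IsFan c x 0 (fun _ => y₀) (fun _ => 0) (fun _ => g₀) := by
    refine ⟨?_, ?_, ?_⟩
    · intro i hi j hj _; omega
    · intro i _; exact hxy.symm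
    · intro l h1 h2; omega
  exact key (Fintype.card V) 0 _ _ _ hfan0 rfl (by omega)

/-- **The extension lemma.** -/
theorem extend (hc : Pc k c) {x y₀ : V} (hxy : x ≠ y₀)
    (hfrx : (fr c x).Nonempty)
    (hcond : ∀ z, z ≠ x → (c x z).card + (if z = y₀ then 1 else 0) ≤ (fr c z).card) :
    Ext c x y₀ := by
  classical
  by_contra noext
  obtain ⟨t, y, f, b, hfan, hy0, hclosed⟩ := build hc hxy noext hfrx
  set T := (Finset.range (t+1)).image y with hT
  have hmemT : ∀ z, z ∈ T ↔ ∃ j ≤ t, y j = z := by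
    intro z
    simp only [hT, Finset.mem_image, Finset.mem_range, Nat.lt_succ_iff]
  have hxT : ∀ z ∈ T, z ≠ x := by
    intro z hz
    obtain ⟨j, hj, rfl⟩ := (hmemT z).1 hz
    exact hfan.2.1 j hj
  have hy₀T : y₀ ∈ T := (hmemT y₀).2 ⟨0, Nat.zero_le t, hy0⟩
  -- counting
  have S1 : ∑ z ∈ T, ((c x z).card + (if z = y₀ then 1 else 0)) ≤ ∑ z ∈ T, (fr c z).card :=
    Finset.sum_le_sum (fun z hz => hcond z (hxT z hz))
  have S2 : ∑ z ∈ T, (if z = y₀ then (1:ℕ) else 0) = 1 := by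
    rw [Finset.sum_ite_eq' T y₀ (fun _ => (1:ℕ)), if_pos hy₀T]
  rw [Finset.sum_add_distrib, S2] at S1
  -- if all free sets were disjoint, contradiction
  have hover : ∃ z ∈ T, ∃ z' ∈ T, z ≠ z' ∧ ¬ Disjoint (fr c z) (fr c z') := by
    by_contra hdisj
    push_neg at hdisj
    have hcup : (T.biUnion (fr c)).card = ∑ z ∈ T, (fr c z).card :=
      Finset.card_biUnion (fun z hz z' hz' hne => hdisj z hz z' hz' hne)
    have hsub : T.biUnion (fr c) ⊆ T.biUnion (c x) := by
      intro g hg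
      obtain ⟨z, hz, hgz⟩ := Finset.mem_biUnion.1 hg
      obtain ⟨j, hj, rfl⟩ := (hmemT z).1 hz
      obtain ⟨m, hm, hgm⟩ := hclosed j hj g hgz
      exact Finset.mem_biUnion.2 ⟨y m, (hmemT (y m)).2 ⟨m, hm, rfl⟩, hgm⟩
    have hcx : (T.biUnion (c x)).card = ∑ z ∈ T, (c x z).card := by
      refine Finset.card_biUnion ?_
      intro z _ z' _ hne
      exact hc.disj x z z' hne
    have := Finset.card_le_card hsub
    omega
  obtain ⟨z, hz, z', hz', hzz', hnd⟩ := hover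
  obtain ⟨g, hgz, hgz'⟩ := Finset.not_disjoint_iff.1 hnd
  obtain ⟨i, hi, rfl⟩ := (hmemT z).1 hz
  obtain ⟨j, hj, rfl⟩ := (hmemT z').1 hz'
  obtain ⟨a, ha⟩ := hfrx
  -- if a is free at some fan vertex, shift wins
  have hafan : ∀ l ≤ t, a ∉ fr c (y l) := by
    intro l hl hafr
    exact noext (hy0 ▸ shift t c hc y f b hfan l hl a ha hafr)
  -- if g is free at x, shift wins
  have hgxfree : g ∉ fr c x := by
    intro hgx
    exact noext (hy0 ▸ shift t c hc y f b hfan i hi g hgx hgz)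
  have hag : a ≠ g := by
    intro h
    exact hafan i hi (h ▸ hgz)
  -- at most one fan edge colored g
  have huniq : ∀ l l', 1 ≤ l → l ≤ t → 1 ≤ l' → l' ≤ t → b l = g → b l' = g → l = l' := by
    intro l l' h1 h2 h1' h2' hbl hbl'
    have hcl := (hfan.2.2 l h1 h2).2.2
    have hcl' := (hfan.2.2 l' h1' h2').2.2
    rw [hbl] at hcl
    rw [hbl'] at hcl'
    exact hfan.1 l h2 l' h2' (unique_use hc hcl hcl')
  -- the three-deficiency argument
  have hdef3 : ∀ (z₁ z₂ z₃ : V), z₁ ≠ z₂ → z₁ ≠ z₃ → z₂ ≠ z₃ →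
      a ∈ fr c z₁ → g ∈ fr c z₂ → g ∈ fr c z₃ →
      z₂ ∈ comp c a g z₁ → z₃ ∈ comp c a g z₁ → False := by
    intro z₁ z₂ z₃ h12 h13 h23 hfz₁ hfz₂ hfz₃ hm2 hm3
    have hdl := defic_le hc hag z₁
    have hsub : ({z₁, z₂, z₃} : Finset V) ⊆ comp c a g z₁ := by
      intro u hu
      simp only [Finset.mem_insert, Finset.mem_singleton] at hu
      rcases hu with rfl | rfl | rfl
      · exact self_mem_comp
      · exact hm2
      · exact hm3
    have hmono : (∑ u ∈ ({z₁, z₂, z₃} : Finset V),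
        ((if a ∈ fr c u then 1 else 0) + (if g ∈ fr c u then 1 else 0))) ≤
        ∑ u ∈ comp c a g z₁,
        ((if a ∈ fr c u then 1 else 0) + (if g ∈ fr c u then 1 else 0)) :=
      Finset.sum_le_sum_of_subset_of_nonneg hsub (fun u _ _ => Nat.zero_le _)
    have hsum3 : 3 ≤ ∑ u ∈ ({z₁, z₂, z₃} : Finset V),
        ((if a ∈ fr c u then 1 else 0) + (if g ∈ fr c u then 1 else 0)) := by
      rw [Finset.sum_insert (by simp [h12, h13]),
        Finset.sum_insert (by simp [h23]), Finset.sum_singleton]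
      simp only [if_pos hfz₁, if_pos hfz₂, if_pos hfz₃]
      omega
    omega
  -- main case analysis
  by_cases hL : ∃ l, 1 ≤ l ∧ l ≤ t ∧ b l = g
  · -- some fan edge is colored g
    obtain ⟨l₀, hl1, hl2, hbl₀⟩ := hL
    obtain ⟨hfl₀lt, hfl₀fr, hfl₀c⟩ := hfan.2.2 l₀ hl1 hl2
    have hgq : g ∈ fr c (y (f l₀)) := hbl₀ ▸ hfl₀fr
    have hflt : f l₀ ≤ t := by omega
    have hqx : y (f l₀) ≠ x := hfan.2.1 (f l₀) hflt
    by_cases hqS : y (f l₀) ∈ comp c a g x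
    · -- case 2b
      obtain ⟨ii, hii, hgii, hneq⟩ : ∃ ii ≤ t, g ∈ fr c (y ii) ∧ y ii ≠ y (f l₀) := by
        by_cases h1 : y i = y (f l₀)
        · exact ⟨j, hj, hgz', fun h => hzz' (h1 ▸ h ▸ rfl)⟩
        · exact ⟨i, hi, hgz, h1⟩
      have hnotin : y ii ∉ comp c a g x := by
        intro h2
        exact hdef3 x (y (f l₀)) (y ii) hqx.symm (hfan.2.1 ii hii).symm
          (fun h => hneq h.symm) ha hgq hgii hqS h2
      have hxS : x ∉ comp c a g (y ii) := fun h => hnotin ((mem_comp_comm hc).1 h)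
      have hqS' : y (f l₀) ∉ comp c a g (y ii) := by
        intro h
        have h1 : y ii ∈ comp c a g (y (f l₀)) := (mem_comp_comm hc).1 h
        rw [comp_eq_of_mem hc hqS] at h1
        exact hnotin h1
      apply noext
      rw [← hy0]
      refine win hc hfan ha (comp_closed hc) hxS hii self_mem_comp hgii ?_
      intro l h1 h2 hbl
      have hll : l = l₀ := huniq l l₀ h1 (h2.trans hii) hl1 hl2 hbl hbl₀
      subst hll
      exact hqS'
    · -- case 2a
      have hxS : x ∉ comp c a g (y (f l₀)) := fun h => hqS ((mem_comp_comm hc).1 h)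
      apply noext
      rw [← hy0]
      refine win hc hfan ha (comp_closed hc) hxS hflt self_mem_comp hgq ?_
      intro l h1 h2 hbl
      have hll : l = l₀ := huniq l l₀ h1 (by omega) hl1 hl2 hbl hbl₀
      omega
  · -- case 1: no fan edge colored g
    push_neg at hL
    have hnotboth : ¬ (y i ∈ comp c a g x ∧ y j ∈ comp c a g x) := by
      rintro ⟨h1, h2⟩
      exact hdef3 x (y i) (y j) (hfan.2.1 i hi).symm (hfan.2.1 j hj).symm hzz'
        ha hgz hgz' h1 h2
    obtain ⟨ii, hii, hgii, hnotin⟩ : ∃ ii ≤ t, g ∈ fr c (y ii) ∧ y ii ∉ comp c a g x := by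
      by_cases h1 : y i ∈ comp c a g x
      · exact ⟨j, hj, hgz', fun h2 => hnotboth ⟨h1, h2⟩⟩
      · exact ⟨i, hi, hgz, h1⟩
    have hxS : x ∉ comp c a g (y ii) := fun h => hnotin ((mem_comp_comm hc).1 h)
    apply noext
    rw [← hy0]
    exact win hc hfan ha (comp_closed hc) hxS hii self_mem_comp hgii
      (fun l h1 h2 hbl => absurd hbl (hL l h1 (h2.trans hii)))

end main


section graphs
variable {M : ℕ}

/-- decrement both symmetric entries of a pair -/
def decr (N : V → V → ℕ) (x y : V) : V → V → ℕ :=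
  fun u v => if (u = x ∧ v = y) ∨ (u = y ∧ v = x) then N u v - 1 else N u v

lemma decr_le {N : V → V → ℕ} {x y u v : V} : decr N x y u v ≤ N u v := by
  unfold decr; split <;> omega

lemma decr_eq_of_ne {N : V → V → ℕ} {x y u v : V}
    (h : ¬ ((u = x ∧ v = y) ∨ (u = y ∧ v = x))) : decr N x y u v = N u v := if_neg h

lemma sum_decr_lt {N : V → V → ℕ} {x y : V} (hxy : x ≠ y) (hpos : 0 < N x y) :
    ∀ E, (∑ u, ∑ v, N u v = E) → (∑ u, ∑ v, decr N x y u v) < E := by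
  intro E hE
  subst hE
  refine Finset.sum_lt_sum (fun u _ => Finset.sum_le_sum (fun v _ => decr_le)) ⟨x, Finset.mem_univ x, ?_⟩
  refine Finset.sum_lt_sum (fun v _ => decr_le) ⟨y, Finset.mem_univ y, ?_⟩
  unfold decr
  rw [if_pos (Or.inl ⟨rfl, rfl⟩)]
  omega

/-- Vizing-type theorem: if every degree is at most `k - M` and every multiplicity
at most `M`, there is a proper `k`-edge-coloring. -/
lemma vizing (N : V → V → ℕ) (hsym : ∀ u v, N u v = N v u) (hdiag : ∀ u, N u u = 0)
    (hdeg : ∀ z, (∑ u, N z u) + M ≤ k) (hmul : ∀ u v, N u v ≤ M) :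
    ∃ c : V → V → Finset (Fin k), Pc k c ∧ ∀ u v, (c u v).card = N u v := by
  classical
  obtain ⟨E, hE⟩ : ∃ E, ∑ u, ∑ v, N u v = E := ⟨_, rfl⟩
  induction E using Nat.strong_induction_on generalizing N with
  | _ E ih =>
    by_cases hzero : ∀ u v, N u v = 0
    · exact ⟨fun _ _ => ∅, ⟨fun _ _ => rfl, fun _ => rfl, fun _ _ _ _ => Finset.disjoint_empty_left _⟩,
        fun u v => by rw [hzero u v]; rfl⟩
    · push_neg at hzero
      obtain ⟨x, y, hxy0⟩ := hzero
      have hxy : x ≠ y := by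
        intro h; rw [h, hdiag] at hxy0; exact hxy0 rfl
      have hpos : 0 < N x y := Nat.pos_of_ne_zero hxy0
      have hsym' : ∀ u v, decr N x y u v = decr N x y v u := by
        intro u v
        unfold decr
        by_cases h : (u = x ∧ v = y) ∨ (u = y ∧ v = x)
        · rw [if_pos h, if_pos (by tauto), hsym]
        · rw [if_neg h, if_neg (by tauto), hsym]
      have hdiag' : ∀ u, decr N x y u u = 0 := by
        intro u
        unfold decr
        rw [if_neg (by rintro (⟨rfl, rfl⟩ | ⟨rfl, rfl⟩) <;> exact hxy rfl), hdiag]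
      have hdeg' : ∀ z, (∑ u, decr N x y z u) + M ≤ k := by
        intro z
        exact le_trans (Nat.add_le_add_right
          (Finset.sum_le_sum (fun u _ => decr_le)) M) (hdeg z)
      have hmul' : ∀ u v, decr N x y u v ≤ M := fun u v => le_trans decr_le (hmul u v)
      have hlt := sum_decr_lt hxy hpos E hE
      obtain ⟨c, hc, hcards⟩ := ih _ hlt (decr N x y) hsym' hdiag' hdeg' hmul' rfl
      have hdC : ∀ z, dC c z = ∑ u, decr N x y z u := by
        intro z
        unfold dC
        exact Finset.sum_congr rfl (fun u _ => hcards z u)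
      have hNxy' : decr N x y x y + 1 = N x y := by
        unfold decr
        rw [if_pos (Or.inl ⟨rfl, rfl⟩)]
        omega
      have hext : Ext c x y := by
        refine extend hc hxy ?_ ?_
        · rw [← Finset.card_pos, fr_card hc, hdC]
          have e1 : ∑ u, decr N x y x u < ∑ u, N x u := by
            refine Finset.sum_lt_sum (fun u _ => decr_le) ⟨y, Finset.mem_univ y, ?_⟩
            omega
          have := hdeg x
          omega
        · intro z hz
          rw [fr_card hc, hdC, hcards]
          by_cases hzy : z = y
          · have e1 : ∑ u, decr N x y z u < ∑ u, N z u := by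
              refine Finset.sum_lt_sum (fun u _ => decr_le) ⟨x, Finset.mem_univ x, ?_⟩
              unfold decr
              rw [if_pos (Or.inr ⟨hzy, rfl⟩), ← hsym]
              rw [hzy]
              omega
            have e2 := hdeg z
            have e3 := hmul x z
            have e4 : decr N x y x z + 1 = N x z := by
              unfold decr
              rw [if_pos (Or.inl ⟨rfl, hzy⟩)]
              have : 0 < N x z := by rw [hzy]; exact hpos
              omega
            simp only [if_pos hzy]
            omega
          · have e1 : decr N x y x z = N x z := decr_eq_of_ne (by tauto)
            have e2 : ∑ u, decr N x y z u ≤ ∑ u, N z u := Finset.sum_le_sum (fun u _ => decr_le)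
            have e3 := hdeg z
            have e4 := hmul x z
            simp only [if_neg hzy]
            omega
      obtain ⟨c', hc', hcards'⟩ := hext
      refine ⟨c', hc', fun u v => ?_⟩
      rw [hcards' u v, hcards u v]
      unfold decr bump
      by_cases h : (u = x ∧ v = y) ∨ (u = y ∧ v = x)
      · rw [if_pos h, if_pos h]
        have : 0 < N u v := by
          rcases h with ⟨rfl, rfl⟩ | ⟨rfl, rfl⟩
          · exact hpos
          · rw [hsym]; exact hpos
        omega
      · rw [if_neg h, if_neg h]
        omega

/-- Coloring with a dominating vertex `v`: `v` has degree at most `k`, all other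
degrees at most `k - M`, multiplicities at most `M ≤ k`. -/
lemma domcolor (N : V → V → ℕ) (v : V) (hsym : ∀ u w, N u w = N w u)
    (hdiag : ∀ u, N u u = 0) (hdegv : ∑ u, N v u ≤ k)
    (hdeg : ∀ u, u ≠ v → (∑ w, N u w) + M ≤ k)
    (hmul : ∀ u w, N u w ≤ M) (hMk : M ≤ k) :
    ∃ c : V → V → Finset (Fin k), Pc k c ∧ ∀ u w, (c u w).card = N u w := by
  classical
  have aux : ∀ (m : ℕ) (N' : V → V → ℕ),
      (∀ u w, u ≠ v → w ≠ v → N' u w = N u w) → (∀ u, N' v u ≤ N v u) →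
      (∀ u w, N' u w = N' w u) → (∀ u, N' u u = 0) → (∑ u, N' v u = m) →
      ∃ c : V → V → Finset (Fin k), Pc k c ∧ ∀ u w, (c u w).card = N' u w := by
    intro m
    induction m with
    | zero =>
      intro N' hoff hle hsym' hdiag' hzsum
      have hz : ∀ u, N' v u = 0 := by
        intro u
        exact (Finset.sum_eq_zero_iff.1 hzsum) u (Finset.mem_univ u)
      refine vizing (M := M) N' hsym' hdiag' ?_ ?_
      · intro z
        by_cases hzv : z = v
        · rw [hzv, hzsum]
          omega
        · refine le_trans (Nat.add_le_add_right (Finset.sum_le_sum ?_) M) (hdeg z hzv)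
          intro u _
          by_cases huv : u = v
          · rw [huv, hsym' z v, hz z]
            exact Nat.zero_le _
          · rw [hoff z u hzv huv]
      · intro u w
        by_cases huv : u = v
        · subst huv; rw [hz w]; exact Nat.zero_le _
        · by_cases hwv : w = v
          · subst hwv; rw [hsym', hz u]; exact Nat.zero_le _
          · rw [hoff u w huv hwv]; exact hmul u w
    | succ m ih =>
      intro N' hoff hle hsym' hdiag' hzsum
      have hexu : ∃ u, N' v u ≠ 0 := by
        by_contra hcon
        push_neg at hcon
        rw [Finset.sum_congr rfl (fun u _ => hcon u)] at hzsum
        simp at hzsum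
      obtain ⟨u, hu0⟩ := hexu
      have huv : u ≠ v := by
        intro h; rw [h, hdiag'] at hu0; exact hu0 rfl
      have hpos : 0 < N' v u := Nat.pos_of_ne_zero hu0
      -- decrement the pair (v,u)
      have hsym'' : ∀ a b₁, decr N' v u a b₁ = decr N' v u b₁ a := by
        intro a b₁
        unfold decr
        by_cases h : (a = v ∧ b₁ = u) ∨ (a = u ∧ b₁ = v)
        · rw [if_pos h, if_pos (by tauto), hsym']
        · rw [if_neg h, if_neg (by tauto), hsym']
      have hdiag'' : ∀ a, decr N' v u a a = 0 := by
        intro a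
        unfold decr
        rw [if_neg (by rintro (⟨rfl, rfl⟩ | ⟨rfl, rfl⟩) <;> exact huv rfl), hdiag']
      have hoff'' : ∀ a b₁, a ≠ v → b₁ ≠ v → decr N' v u a b₁ = N a b₁ := by
        intro a b₁ hav hbv
        rw [decr_eq_of_ne (by tauto), hoff a b₁ hav hbv]
      have hle'' : ∀ a, decr N' v u v a ≤ N v a := fun a => le_trans decr_le (hle a)
      have hdecu : decr N' v u v u + 1 = N' v u := by
        unfold decr
        rw [if_pos (Or.inl ⟨rfl, rfl⟩)]
        omega
      have hdecother : ∀ w, w ≠ u → decr N' v u v w = N' v w := by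
        intro w hw
        exact decr_eq_of_ne (by tauto)
      have hsum'' : ∑ w, decr N' v u v w = m := by
        have h1 : decr N' v u v u + ∑ w ∈ univ.erase u, decr N' v u v w
            = ∑ w, decr N' v u v w := Finset.add_sum_erase _ _ (Finset.mem_univ u)
        have h2 : N' v u + ∑ w ∈ univ.erase u, N' v w = ∑ w, N' v w :=
          Finset.add_sum_erase _ _ (Finset.mem_univ u)
        have h3 : ∑ w ∈ univ.erase u, decr N' v u v w = ∑ w ∈ univ.erase u, N' v w :=
          Finset.sum_congr rfl (fun w hw => hdecother w (Finset.ne_of_mem_erase hw))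
        omega
      obtain ⟨c, hc, hcards⟩ := ih (decr N' v u) hoff'' hle'' hsym'' hdiag'' hsum''
      have hdC : ∀ z, dC c z = ∑ w, decr N' v u z w := by
        intro z
        unfold dC
        exact Finset.sum_congr rfl (fun w _ => hcards z w)
      have hsumN : ∑ w, N' v w ≤ ∑ w, N v w := Finset.sum_le_sum (fun w _ => hle w)
      have hext : Ext c v u := by
        refine extend hc (Ne.symm huv) ?_ ?_
        · rw [← Finset.card_pos, fr_card hc, hdC, hsum'']
          omega
        · intro z hz
          rw [fr_card hc, hdC, hcards]
          have f1 : decr N' v u z v + ∑ w ∈ univ.erase v, decr N' v u z w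
              = ∑ w, decr N' v u z w := Finset.add_sum_erase _ _ (Finset.mem_univ v)
          have f2 : N z v + ∑ w ∈ univ.erase v, N z w = ∑ w, N z w :=
            Finset.add_sum_erase _ _ (Finset.mem_univ v)
          have f3 : ∑ w ∈ univ.erase v, decr N' v u z w = ∑ w ∈ univ.erase v, N z w := by
            refine Finset.sum_congr rfl (fun w hw => ?_)
            exact hoff'' z w hz (Finset.ne_of_mem_erase hw)
          have f4 : decr N' v u v z = decr N' v u z v := hsym'' v z
          have f5 := hdeg z hz
          have f6 : N z v = N v z := hsym z v
          have f9 : N v z ≤ M := hmul v z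
          by_cases hzu : z = u
          · have f7 : decr N' v u v z + 1 = N' v z := by rw [hzu]; exact hdecu
            have f8 : N' v z ≤ N v z := hle z
            simp only [if_pos hzu]
            omega
          · have f7 : decr N' v u v z = N' v z := hdecother z hzu
            have f8 : N' v z ≤ N v z := hle z
            simp only [if_neg hzu]
            omega
      obtain ⟨c', hc', hcards'⟩ := hext
      refine ⟨c', hc', fun a b₁ => ?_⟩
      rw [hcards' a b₁, hcards a b₁]
      unfold decr bump
      by_cases h : (a = v ∧ b₁ = u) ∨ (a = u ∧ b₁ = v)
      · rw [if_pos h, if_pos h]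
        have : 0 < N' a b₁ := by
          rcases h with ⟨rfl, rfl⟩ | ⟨rfl, rfl⟩
          · exact hpos
          · rw [hsym']; exact hpos
        omega
      · rw [if_neg h, if_neg h]
        omega
  exact aux (∑ w, N v w) N (fun _ _ _ _ => rfl) (fun _ => le_rfl) hsym hdiag rfl

end graphs

section combine

/-- Combine colorings: a `k₁`-coloring of `A` and a `k₂`-coloring of `B` give a
`(k₁+k₂)`-coloring of `A + B`. -/
lemma combine {k₁ k₂ : ℕ} {A B : V → V → ℕ}
    (hA : ∃ c : V → V → Finset (Fin k₁), Pc k₁ c ∧ ∀ u v, (c u v).card = A u v)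
    (hB : ∃ c : V → V → Finset (Fin k₂), Pc k₂ c ∧ ∀ u v, (c u v).card = B u v) :
    ∃ c : V → V → Finset (Fin (k₁ + k₂)), Pc (k₁ + k₂) c ∧
      ∀ u v, (c u v).card = A u v + B u v := by
  obtain ⟨c₁, hp₁, hc₁⟩ := hA
  obtain ⟨c₂, hp₂, hc₂⟩ := hB
  have hinj₁ : Function.Injective (Fin.castAdd (n := k₁) k₂) := fun a b h => by
    have := congrArg Fin.val h
    simp [Fin.castAdd, Fin.castLE] at this
    exact Fin.ext this
  have hinj₂ : Function.Injective (Fin.natAdd (m := k₂) k₁) := fun a b h => by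
    have := congrArg Fin.val h
    simp [Fin.natAdd] at this
    exact Fin.ext this
  have hcross : ∀ (s : Finset (Fin k₁)) (t : Finset (Fin k₂)),
      Disjoint (s.image (Fin.castAdd k₂)) (t.image (Fin.natAdd k₁)) := by
    intro s t
    rw [Finset.disjoint_left]
    intro g hg1 hg2
    obtain ⟨a, _, ha⟩ := Finset.mem_image.1 hg1
    obtain ⟨b, _, hb⟩ := Finset.mem_image.1 hg2
    rw [← hb] at ha
    have := congrArg Fin.val ha
    simp [Fin.natAdd, Fin.castAdd, Fin.castLE] at this
    omega
  refine ⟨fun u v => (c₁ u v).image (Fin.castAdd k₂) ∪ (c₂ u v).image (Fin.natAdd k₁),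
    ⟨?_, ?_, ?_⟩, ?_⟩
  · intro u v
    rw [hp₁.symm u v, hp₂.symm u v]
  · intro v
    rw [hp₁.diag, hp₂.diag]
    simp
  · intro v u w huw
    have d₁ : Disjoint ((c₁ v u).image (Fin.castAdd k₂)) ((c₁ v w).image (Fin.castAdd k₂)) :=
      (Finset.disjoint_image hinj₁).2 (hp₁.disj v u w huw)
    have d₂ : Disjoint ((c₂ v u).image (Fin.natAdd k₁)) ((c₂ v w).image (Fin.natAdd k₁)) :=
      (Finset.disjoint_image hinj₂).2 (hp₂.disj v u w huw)
    rw [Finset.disjoint_union_left]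
    constructor
    · rw [Finset.disjoint_union_right]
      exact ⟨d₁, hcross _ _⟩
    · rw [Finset.disjoint_union_right]
      exact ⟨(hcross _ _).symm, d₂⟩
  · intro u v
    rw [Finset.card_union_of_disjoint (hcross _ _),
      Finset.card_image_of_injective _ hinj₁, Finset.card_image_of_injective _ hinj₂,
      hc₁, hc₂]

/-- Scale: a `k₀`-coloring of `B` gives a `t•k₀`-coloring of `t•B`. -/
lemma scale {k₀ : ℕ} {B : V → V → ℕ}
    (hB : ∃ c : V → V → Finset (Fin k₀), Pc k₀ c ∧ ∀ u v, (c u v).card = B u v) :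
    ∀ t : ℕ, ∃ c : V → V → Finset (Fin (t * k₀)), Pc (t * k₀) c ∧
      ∀ u v, (c u v).card = t * B u v := by
  intro t
  induction t with
  | zero =>
    refine ⟨fun _ _ => ∅, ⟨fun _ _ => rfl, fun _ => rfl,
      fun _ _ _ _ => Finset.disjoint_empty_left _⟩, fun u v => by simp⟩
  | succ t ih =>
    have := combine ih hB
    obtain ⟨c, hp, hc⟩ := this
    have he : t * k₀ + k₀ = (t+1) * k₀ := by ring
    refine ⟨fun u v => (c u v).map (Fin.castOrderIso (by omega)).toOrderEmbedding.toEmbedding,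
      ⟨?_, ?_, ?_⟩, ?_⟩
    · intro u v; rw [hp.symm u v]
    · intro v; rw [hp.diag]; rfl
    · intro v u w huw
      rw [Finset.disjoint_map]
      exact hp.disj v u w huw
    · intro u v
      rw [Finset.card_map, hc]
      ring

end combine


section kn

/-- `K_n` is properly `n`-edge-colorable (any `n > 0`). -/
lemma Kn_color (n : ℕ) (hpos : 0 < n) :
    ∃ c : Fin n → Fin n → Finset (Fin n), Pc n c ∧
      ∀ u v, (c u v).card = if u = v then 0 else 1 := by
  refine ⟨fun u v => if u = v then ∅ else {⟨(u.val + v.val) % n, Nat.mod_lt _ hpos⟩},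
    ⟨?_, ?_, ?_⟩, ?_⟩
  · intro u v
    by_cases h : u = v
    · rw [if_pos h, if_pos h.symm]
    · rw [if_neg h, if_neg (Ne.symm h), Nat.add_comm]
  · intro v; rw [if_pos rfl]
  · intro z u w huw
    by_cases hu : z = u
    · rw [if_pos hu]; exact Finset.disjoint_empty_left _
    by_cases hw : z = w
    · rw [if_pos hw]; exact Finset.disjoint_empty_right _
    rw [if_neg hu, if_neg hw, Finset.disjoint_singleton]
    intro hcol
    apply huw
    have hval := congrArg Fin.val hcol
    simp only at hval
    have hcan := Nat.ModEq.add_left_cancel' z.val (a := u.val) (b := w.val) hval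
    have : u.val = w.val := by
      rw [← Nat.mod_eq_of_lt u.isLt, ← Nat.mod_eq_of_lt w.isLt]
      exact hcan
    exact Fin.ext this
  · intro u v
    dsimp only
    by_cases h : u = v
    · rw [if_pos h, if_pos h]; rfl
    · rw [if_neg h, if_neg h]; rfl

/-- For even `n`, `K_n` is properly `(n-1)`-edge-colorable. -/
lemma Kn_even_color (n : ℕ) (heven : Even n) (hpos : 0 < n) :
    ∃ c : Fin n → Fin n → Finset (Fin (n-1)), Pc (n-1) c ∧
      ∀ u v, (c u v).card = if u = v then 0 else 1 := by
  have hn2 : 2 ≤ n := by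
    rcases heven with ⟨r, hr⟩; omega
  have hq : 0 < n - 1 := by omega
  have hodd : Odd (n - 1) := Nat.Even.sub_odd (by omega) heven (by norm_num)
  have hcop : Nat.gcd (n-1) 2 = 1 := by
    rw [Nat.gcd_comm]
    exact Nat.coprime_two_left.mpr hodd
  set q := n - 1 with hqdef
  have hfin : ∀ u : Fin n, u.val ≠ q → u.val < q := by
    intro u hu
    have := u.isLt
    omega
  have flast : ∀ u w : Fin n, u.val = q → w.val = q → u = w := by
    intro u w h1 h2
    exact Fin.ext (by omega)
  -- cancellation lemmas
  have hA : ∀ z a b₁ : ℕ, a < q → b₁ < q → (z + a) % q = (z + b₁) % q → a = b₁ := by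
    intro z a b₁ ha hb h
    have := Nat.ModEq.add_left_cancel' z (a := a) (b := b₁) h
    rw [← Nat.mod_eq_of_lt ha, ← Nat.mod_eq_of_lt hb]
    exact this
  have hB : ∀ z a : ℕ, a < q → z < q → (z + a) % q = (2 * z) % q → a = z := by
    intro z a ha hz h
    rw [Nat.two_mul] at h
    exact hA z a z ha hz h
  have hC : ∀ a b₁ : ℕ, a < q → b₁ < q → (2 * a) % q = (2 * b₁) % q → a = b₁ := by
    intro a b₁ ha hb h
    have := Nat.ModEq.cancel_left_of_coprime hcop (a := a) (b := b₁) h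
    rw [← Nat.mod_eq_of_lt ha, ← Nat.mod_eq_of_lt hb]
    exact this
  refine ⟨fun u v => if u = v then ∅ else if u.val = q then {⟨(2 * v.val) % q, Nat.mod_lt _ hq⟩}
      else if v.val = q then {⟨(2 * u.val) % q, Nat.mod_lt _ hq⟩}
      else {⟨(u.val + v.val) % q, Nat.mod_lt _ hq⟩},
    ⟨?_, ?_, ?_⟩, ?_⟩
  · intro u v
    by_cases h : u = v
    · rw [if_pos h, if_pos h.symm]
    · by_cases hu : u.val = q
      · have hv : v.val ≠ q := fun hv => h (flast u v hu hv)
        simp only [if_neg h, if_neg (Ne.symm h), if_pos hu, if_neg hv]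
      · by_cases hv : v.val = q
        · simp only [if_neg h, if_neg (Ne.symm h), if_neg hu, if_pos hv]
        · simp only [if_neg h, if_neg (Ne.symm h), if_neg hu, if_neg hv]
          rw [Nat.add_comm]
  · intro v; rw [if_pos rfl]
  · intro z u w huw
    by_cases hu : z = u
    · rw [if_pos hu]; exact Finset.disjoint_empty_left _
    by_cases hw : z = w
    · rw [if_pos hw]; exact Finset.disjoint_empty_right _
    rw [if_neg hu, if_neg hw]
    by_cases hz : z.val = q
    · have hu' : u.val ≠ q := fun h => hu (flast z u hz h)
      have hw' : w.val ≠ q := fun h => hw (flast z w hz h)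
      rw [if_pos hz, if_pos hz, Finset.disjoint_singleton]
      intro hcol
      apply huw
      have hval := congrArg Fin.val hcol
      simp only at hval
      exact Fin.ext (hC _ _ (hfin u hu') (hfin w hw') hval)
    · rw [if_neg hz, if_neg hz]
      have hz' : z.val < q := hfin z hz
      by_cases hu' : u.val = q <;> by_cases hw' : w.val = q
      · exact absurd (flast u w hu' hw') huw
      · rw [if_pos hu', if_neg hw', Finset.disjoint_singleton]
        intro hcol
        apply hw
        have hval := congrArg Fin.val hcol
        simp only at hval
        exact Fin.ext (hB z.val w.val (hfin w hw') hz' hval.symm).symm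
      · rw [if_neg hu', if_pos hw', Finset.disjoint_singleton]
        intro hcol
        apply hu
        have hval := congrArg Fin.val hcol
        simp only at hval
        exact Fin.ext (hB z.val u.val (hfin u hu') hz' hval).symm
      · rw [if_neg hu', if_neg hw', Finset.disjoint_singleton]
        intro hcol
        apply huw
        have hval := congrArg Fin.val hcol
        simp only at hval
        exact Fin.ext (hA z.val u.val w.val (hfin u hu') (hfin w hw') hval)
  · intro u v
    dsimp only
    by_cases h : u = v
    · rw [if_pos h, if_pos h]; rfl
    · rw [if_neg h, if_neg h]
      by_cases hu : u.val = q
      · rw [if_pos hu]; rfl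
      · rw [if_neg hu]
        by_cases hv : v.val = q
        · rw [if_pos hv]; rfl
        · rw [if_neg hv]; rfl

end kn

end GSP

/-- **Corollary.** Let `G` be a loopless multigraph on `n` vertices with
ordered degree sequence `d 1 ≥ d 2 ≥ … ≥ d n`. If
`d 1 - d 2 ≥ μ(G) - μ_min(G) ≥ 2`, then `χ'(G) = Δ(G)` when `n` is even, and
`χ'(G) ≤ Δ(G) + μ_min(G)` when `n` is odd. -/
theorem chromIndex_of_large_degree_gap {n : ℕ}
    (G : Fin n → Fin n → ℕ) (hG : IsMultigraph G)
    (d : ℕ → ℕ) (hd : ∀ i j, i ≤ j → d j ≤ d i)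
    (hdseq : ∃ σ : Equiv.Perm (Fin n), ∀ i : Fin n, d (i.val + 1) = mdeg G (σ i))
    (hgap : (muMax G : ℤ) - (muMin G : ℤ) ≤ (d 1 : ℤ) - (d 2 : ℤ))
    (hmu : (2 : ℤ) ≤ (muMax G : ℤ) - (muMin G : ℤ)) :
    (Even n → chromIndex G = maxDeg G) ∧
    (Odd n → chromIndex G ≤ maxDeg G + muMin G) := by
  classical
  obtain ⟨σ, hσ⟩ := hdseq
  have hGsym := hG.1
  have hGdiag := hG.2
  have hmm : muMin G + 2 ≤ muMax G := by
    have h1 : (muMin G : ℤ) + 2 ≤ (muMax G : ℤ) := by omega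
    exact_mod_cast h1
  have hmaxpos : 0 < muMax G := by omega
  -- n ≥ 2
  have hn1 : 0 < n := by
    by_contra h
    push_neg at h
    interval_cases n
    revert hmaxpos
    rw [muMax]
    simp [Finset.univ_eq_empty]
  obtain ⟨p, hp, hpe⟩ :=
    Finset.exists_mem_eq_sup (univ : Finset (Fin n × Fin n))
      (Finset.univ_nonempty_iff.2 ⟨(⟨0, hn1⟩, ⟨0, hn1⟩)⟩)
      (fun p : Fin n × Fin n => if p.1 = p.2 then 0 else G p.1 p.2)
  have hpne : p.1 ≠ p.2 := by
    intro h
    rw [muMax, hpe, if_pos h] at hmaxpos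
    omega
  have hn2 : 2 ≤ n := by
    by_contra h
    push_neg at h
    exact hpne (Fin.ext (by omega))
  -- multiplicity bounds
  have hmin_le : ∀ u w : Fin n, u ≠ w → muMin G ≤ G u w :=
    fun u w h => Nat.sInf_le ⟨u, w, h, rfl⟩
  have hmax_ge : ∀ u w : Fin n, u ≠ w → G u w ≤ muMax G := by
    intro u w h
    have := Finset.le_sup (f := fun p : Fin n × Fin n => if p.1 = p.2 then 0 else G p.1 p.2)
      (Finset.mem_univ (u, w))
    simp [h] at this; exact this
  -- the dominating vertex
  set v0 : Fin n := σ ⟨0, hn1⟩ with hv0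
  have hd1 : mdeg G v0 = d 1 := (hσ ⟨0, hn1⟩).symm
  have hother : ∀ u, u ≠ v0 → mdeg G u ≤ d 2 := by
    intro u hu
    have hiu : σ (σ.symm u) = u := σ.apply_symm_apply u
    have hval : 1 ≤ (σ.symm u).val := by
      by_contra h
      push_neg at h
      apply hu
      have hvv : (σ.symm u).val = 0 := by omega
      have h0 : σ.symm u = ⟨0, hn1⟩ := Fin.ext hvv
      rw [← hiu, h0, hv0]
    have h2 := hσ (σ.symm u)
    rw [hiu] at h2
    rw [← h2]
    exact hd 2 ((σ.symm u).val + 1) (by omega)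
  have hdmax : maxDeg G = d 1 := by
    apply le_antisymm
    · apply Finset.sup_le
      intro u _
      have hiu : σ (σ.symm u) = u := σ.apply_symm_apply u
      have h2 := hσ (σ.symm u)
      rw [hiu] at h2
      rw [← h2]
      exact hd 1 ((σ.symm u).val + 1) (by omega)
    · rw [← hd1]
      exact Finset.le_sup (Finset.mem_univ v0)
  have hmm' : muMin G ≤ muMax G := by omega
  have hd21 : d 2 + (muMax G - muMin G) ≤ d 1 := by
    zify [hmm']
    omega
  set μm := muMin G with hμm
  set m := muMax G - muMin G with hm
  set H : Fin n → Fin n → ℕ := fun u w => G u w - μm with hH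
  have hHsym : ∀ u w, H u w = H w u := by
    intro u w
    simp only [hH]
    rw [hGsym]
  have hHdiag : ∀ u, H u u = 0 := by
    intro u
    simp only [hH]
    rw [hGdiag]
    omega
  have hdecomp : ∀ u w, G u w = H u w + μm * (if u = w then 0 else 1) := by
    intro u w
    by_cases h : u = w
    · subst h
      rw [if_pos rfl, hHdiag, hGdiag]
      simp
    · rw [if_neg h, mul_one]
      simp only [hH]
      exact (Nat.sub_add_cancel (hmin_le u w h)).symm
  have hK1sum : ∀ z : Fin n, ∑ u, (if z = u then (0:ℕ) else 1) = n - 1 := by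
    intro z
    have e : ∀ u : Fin n, (if z = u then (0:ℕ) else 1) + (if z = u then 1 else 0) = 1 := by
      intro u; split <;> rfl
    have e2 : ∑ u, ((if z = u then (0:ℕ) else 1) + (if z = u then 1 else 0)) = n := by
      rw [Finset.sum_congr rfl (fun u _ => e u)]
      simp
    rw [Finset.sum_add_distrib] at e2
    have e3 : ∑ u : Fin n, (if z = u then (1:ℕ) else 0) = 1 := by
      rw [Finset.sum_ite_eq]
      simp
    omega
  have hdegsplit : ∀ z, mdeg G z = mdeg H z + μm * (n-1) := by
    intro z
    show ∑ u, G z u = (∑ u, H z u) + μm * (n-1)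
    rw [Finset.sum_congr rfl (fun u _ => hdecomp z u), Finset.sum_add_distrib,
      ← Finset.mul_sum, hK1sum]
  set kH := d 1 - μm * (n-1) with hkH
  have hdegH_v0 : mdeg H v0 + μm * (n-1) = d 1 := by rw [← hdegsplit, hd1]
  have hkH' : kH + μm * (n-1) = d 1 := by omega
  have hdegv0 : mdeg H v0 ≤ kH := by omega
  have hdegH : ∀ u, u ≠ v0 → mdeg H u + m ≤ kH := by
    intro u hu
    have h1 := hdegsplit u
    have h2 := hother u hu
    omega
  have hmulH : ∀ u w, H u w ≤ m := by
    intro u w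
    by_cases h : u = w
    · subst h
      rw [hHdiag]
      exact Nat.zero_le _
    · have := hmax_ge u w h
      simp only [hH]
      omega
  have hmkH : m ≤ kH := by
    haveI : Nontrivial (Fin n) := Fin.nontrivial_iff_two_le.mpr hn2
    obtain ⟨u, hu⟩ := exists_ne v0
    have := hdegH u hu
    omega
  obtain ⟨cH, hPcH, hcardsH⟩ := GSP.domcolor (k := kH) (M := m) H v0 hHsym hHdiag
    hdegv0 (fun u hu => hdegH u hu) hmulH hmkH
  -- lower bound on any coloring
  have hlow : ∀ k : ℕ, Colorable G k → maxDeg G ≤ k := by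
    rintro k ⟨c, hsym', hcards', hdisj'⟩
    apply Finset.sup_le
    intro z _
    have hPc : GSP.Pc k c := ⟨hsym',
      fun u => Finset.card_eq_zero.1 (by rw [hcards' u u, hGdiag]), hdisj'⟩
    have h1 : GSP.dC c z = mdeg G z := Finset.sum_congr rfl (fun u _ => hcards' z u)
    have h2 := GSP.dC_le hPc z
    omega
  constructor
  · -- even case
    intro heven
    obtain ⟨cK, hPcK, hcardsK⟩ := GSP.Kn_even_color n heven hn1
    obtain ⟨cS, hPcS, hcardsS⟩ := GSP.scale ⟨cK, hPcK, hcardsK⟩ μm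
    obtain ⟨c, hp, hcards⟩ := GSP.combine ⟨cH, hPcH, hcardsH⟩ ⟨cS, hPcS, hcardsS⟩
    have hnum : kH + μm * (n-1) = maxDeg G := by rw [hdmax]; omega
    have hcol : Colorable G (maxDeg G) := by
      rw [← hnum]
      refine ⟨c, hp.symm, ?_, hp.disj⟩
      intro u v
      rw [hcards u v, ← hcardsS u v, hcardsS u v, ← hdecomp u v]
    have hmem : maxDeg G ∈ {k | Colorable G k} := hcol
    apply le_antisymm (Nat.sInf_le hmem)
    have hne : {k | Colorable G k}.Nonempty := ⟨_, hmem⟩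
    exact hlow _ (Nat.sInf_mem hne)
  · -- odd case
    intro _
    obtain ⟨cK, hPcK, hcardsK⟩ := GSP.Kn_color n hn1
    obtain ⟨cS, hPcS, hcardsS⟩ := GSP.scale ⟨cK, hPcK, hcardsK⟩ μm
    obtain ⟨c, hp, hcards⟩ := GSP.combine ⟨cH, hPcH, hcardsH⟩ ⟨cS, hPcS, hcardsS⟩
    have hmuln : μm * n = μm * (n-1) + μm := by
      have h1 : n - 1 + 1 = n := by omega
      rw [← h1, Nat.mul_add, mul_one, h1]
    have hnum : kH + μm * n = maxDeg G + μm := by rw [hdmax]; omega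
    have hcol : Colorable G (maxDeg G + μm) := by
      rw [← hnum]
      refine ⟨c, hp.symm, ?_, hp.disj⟩
      intro u v
      rw [hcards u v, ← hdecomp u v]
    exact Nat.sInf_le hcol
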